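/- arXiv:2111.13761 — 5 statements merged into one kernel-verified Lean document; each statement's English description precedes it below -/
import Mathlib

section
/- For the cubulation map f sending each triangle of the regular triangular tiling of the plane to its hyperplane coordinates (v1, v2, v3), two triangles that share an edge are mapped to vertices of the integer lattice Z^3 that differ in exactly one coordinate, and in that coordinate by exactly 1. -/
noncomputable def lineF : Fin 3 → ℝ × ℝ → ℝ := fun i p =>
  if i = 0 then p.2 - 1/3
  else if i = 1 then (Real.sqrt 3 * p.1 - p.2) / 2 - 1/3
  else -(Real.sqrt 3 * p.1 + p.2) / 2 - 1/3

def triRegion (v : Fin 3 → ℤ) : Set (ℝ × ℝ) :=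
  {p | ∀ i : Fin 3, ((v i : ℝ) - 1 ≤ lineF i p ∧ lineF i p ≤ (v i : ℝ))}

def IsTile (v : Fin 3 → ℤ) : Prop := (interior (triRegion v)).Nonempty

abbrev Tile : Type := {v : Fin 3 → ℤ // IsTile v}

def Tile.region (T : Tile) : Set (ℝ × ℝ) := triRegion T.val

def EdgeAdj (T U : Tile) : Prop := T ≠ U ∧ ¬ (T.region ∩ U.region).Subsingleton

def VertexAdj (T U : Tile) : Prop := T ≠ U ∧ (T.region ∩ U.region).Nonempty

def sumv (v : Fin 3 → ℤ) : ℤ := v 0 + v 1 + v 2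

def dualGraph : SimpleGraph Tile where
  Adj := EdgeAdj
  symm := ⟨fun T U h => ⟨h.1.symm, fun hs => h.2 (by rwa [Set.inter_comm] at hs)⟩⟩
  loopless := ⟨fun T h => h.1 rfl⟩

lemma lineF0 (p : ℝ × ℝ) : lineF 0 p = p.2 - 1/3 := by simp [lineF]
lemma lineF1 (p : ℝ × ℝ) : lineF 1 p = (Real.sqrt 3 * p.1 - p.2) / 2 - 1/3 := by
  simp [lineF]
lemma lineF2 (p : ℝ × ℝ) : lineF 2 p = -(Real.sqrt 3 * p.1 + p.2) / 2 - 1/3 := by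
  simp [lineF]

lemma sumLineF (p : ℝ × ℝ) : lineF 0 p + lineF 1 p + lineF 2 p = -1 := by
  rw [lineF0, lineF1, lineF2]; ring

lemma inj01 (p q : ℝ × ℝ) (h0 : lineF 0 p = lineF 0 q) (h1 : lineF 1 p = lineF 1 q) : p = q := by
  rw [lineF0, lineF0] at h0
  rw [lineF1, lineF1] at h1
  have hy : p.2 = q.2 := by linarith
  have hx : Real.sqrt 3 * p.1 = Real.sqrt 3 * q.1 := by linarith
  have h3 : Real.sqrt 3 ≠ 0 := by positivity
  exact Prod.ext (mul_left_cancel₀ h3 hx) hy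

lemma inj2 (i j : Fin 3) (hij : i ≠ j) (p q : ℝ × ℝ)
    (hi : lineF i p = lineF i q) (hj : lineF j p = lineF j q) : p = q := by
  have hs := sumLineF p
  have hs' := sumLineF q
  fin_cases i <;> fin_cases j <;>
    simp only [Fin.mk_zero, Fin.mk_one, show (⟨2, by omega⟩ : Fin 3) = 2 from rfl] at hi hj <;>
    first
    | exact absurd rfl hij
    | exact inj01 p q hi hj
    | exact inj01 p q hj hi
    | exact inj01 p q hi (by linarith)
    | exact inj01 p q hj (by linarith)
    | exact inj01 p q (by linarith) hi
    | exact inj01 p q (by linarith) hj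

lemma fixed_of_diff (v w : Fin 3 → ℤ) (i : Fin 3) (p : ℝ × ℝ)
    (hv : (v i : ℝ) - 1 ≤ lineF i p ∧ lineF i p ≤ (v i : ℝ))
    (hw : (w i : ℝ) - 1 ≤ lineF i p ∧ lineF i p ≤ (w i : ℝ))
    (hne : v i ≠ w i) : lineF i p = min (v i : ℝ) (w i : ℝ) := by
  have h1 : (v i : ℝ) - 1 ≤ (w i : ℝ) := le_trans hv.1 hw.2
  have h2 : (w i : ℝ) - 1 ≤ (v i : ℝ) := le_trans hw.1 hv.2
  have h1' : v i - 1 ≤ w i := by exact_mod_cast h1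
  have h2' : w i - 1 ≤ v i := by exact_mod_cast h2
  rcases lt_or_gt_of_ne hne with hlt | hlt
  · have hw1 : w i = v i + 1 := by omega
    rw [min_eq_left (by exact_mod_cast hlt.le)]
    have : (w i : ℝ) - 1 = (v i : ℝ) := by rw [hw1]; push_cast; ring
    linarith [hw.1, hv.2]
  · have hv1 : v i = w i + 1 := by omega
    rw [min_eq_right (by exact_mod_cast hlt.le)]
    have : (v i : ℝ) - 1 = (w i : ℝ) := by rw [hv1]; push_cast; ring
    linarith [hv.1, hw.2]

theorem cubulation_preserves_adjacency (T U : Tile) (h : EdgeAdj T U) :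
    ∃ i : Fin 3, |T.val i - U.val i| = 1 ∧ ∀ j : Fin 3, j ≠ i → T.val j = U.val j := by
  obtain ⟨hTU, hns⟩ := h
  rw [Set.not_subsingleton_iff] at hns
  obtain ⟨p, hp, q, hq, hpq⟩ := hns
  obtain ⟨hpT, hpU⟩ := hp
  obtain ⟨hqT, hqU⟩ := hq
  have hvw : T.val ≠ U.val := fun e => hTU (Subtype.ext e)
  have hex : ∃ i, T.val i ≠ U.val i := by
    by_contra hc
    push_neg at hc
    exact hvw (funext hc)
  obtain ⟨i, hi⟩ := hex
  refine ⟨i, ?_, ?_⟩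
  · have h1 : (T.val i : ℝ) - 1 ≤ (U.val i : ℝ) := le_trans (hpT i).1 (hpU i).2
    have h2 : (U.val i : ℝ) - 1 ≤ (T.val i : ℝ) := le_trans (hpU i).1 (hpT i).2
    have h1' : T.val i - 1 ≤ U.val i := by exact_mod_cast h1
    have h2' : U.val i - 1 ≤ T.val i := by exact_mod_cast h2
    have : T.val i - U.val i = 1 ∨ T.val i - U.val i = -1 := by omega
    rcases this with e | e <;> simp [e]
  · intro j hj
    by_contra hjne
    have hip : lineF i p = min (T.val i : ℝ) (U.val i : ℝ) :=
      fixed_of_diff T.val U.val i p (hpT i) (hpU i) hi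
    have hiq : lineF i q = min (T.val i : ℝ) (U.val i : ℝ) :=
      fixed_of_diff T.val U.val i q (hqT i) (hqU i) hi
    have hjp : lineF j p = min (T.val j : ℝ) (U.val j : ℝ) :=
      fixed_of_diff T.val U.val j p (hpT j) (hpU j) hjne
    have hjq : lineF j q = min (T.val j : ℝ) (U.val j : ℝ) :=
      fixed_of_diff T.val U.val j q (hqT j) (hqU j) hjne
    exact hpq (inj2 i j (Ne.symm hj) p q (hip.trans hiq.symm) (hjp.trans hjq.symm))
end

section
/- The six triangles of the regular triangular tiling sharing a common vertex form a hexagon in the dual graph, and their cubulation images are all contained in a single unit cube of the standard cubulation of R^3; i.e., there exists (a,b,c) ∈ Z^3 such that all six images lie in {a,a+1}×{b,b+1}×{c,c+1}. -/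
lemma triRegion_mem_iff {v : Fin 3 → ℤ} {q : ℝ × ℝ} :
    q ∈ triRegion v ↔ ∀ i : Fin 3, ((v i : ℝ) - 1 ≤ lineF i q ∧ lineF i q ≤ (v i : ℝ)) :=
  Iff.rfl

lemma lineF_zero (q : ℝ × ℝ) : lineF 0 q = q.2 - 1/3 := by simp [lineF]

lemma lineF_one (q : ℝ × ℝ) : lineF 1 q = (Real.sqrt 3 * q.1 - q.2) / 2 - 1/3 := by
  simp [lineF, show (1 : Fin 3) ≠ 0 by decide]

lemma lineF_two (q : ℝ × ℝ) : lineF 2 q = -(Real.sqrt 3 * q.1 + q.2) / 2 - 1/3 := by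
  simp [lineF, show (2 : Fin 3) ≠ 0 by decide, show (2 : Fin 3) ≠ 1 by decide]

lemma lineF_sum (q : ℝ × ℝ) : lineF 0 q + lineF 1 q + lineF 2 q = -1 := by
  rw [lineF_zero, lineF_one, lineF_two]; ring

lemma isTile_sum {v : Fin 3 → ℤ} (h : IsTile v) : sumv v = 0 ∨ sumv v = 1 := by
  obtain ⟨q, hq⟩ := h
  obtain ⟨ε, hε, hball⟩ := Metric.mem_nhds_iff.mp (mem_interior_iff_mem_nhds.mp hq)
  have hqm : q ∈ triRegion v := hball (Metric.mem_ball_self hε)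
  have hq2m : (q.1, q.2 + ε/2) ∈ triRegion v := by
    apply hball
    rw [Metric.mem_ball, Prod.dist_eq]
    simp [Real.dist_eq]
    exact ⟨hε, by rw [abs_of_pos hε]; linarith⟩
  by_contra hcon
  have hsv : sumv v = v 0 + v 1 + v 2 := rfl
  have hcase : v 0 + v 1 + v 2 ≤ -1 ∨ 2 ≤ v 0 + v 1 + v 2 := by omega
  have b1 := triRegion_mem_iff.mp hqm 0
  have b2 := triRegion_mem_iff.mp hqm 1
  have b3 := triRegion_mem_iff.mp hqm 2
  have c1 := triRegion_mem_iff.mp hq2m 0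
  have c2 := triRegion_mem_iff.mp hq2m 1
  have c3 := triRegion_mem_iff.mp hq2m 2
  have hsq := lineF_sum q
  have hsq2 := lineF_sum (q.1, q.2 + ε/2)
  have hl0 : lineF 0 (q.1, q.2 + ε/2) = lineF 0 q + ε/2 := by
    rw [lineF_zero, lineF_zero]; ring
  have hcast : ((v 0 : ℝ) + v 1 + v 2 : ℝ) = ((v 0 + v 1 + v 2 : ℤ) : ℝ) := by push_cast; ring
  rcases hcase with hc | hc
  · have hcR : (v 0 : ℝ) + v 1 + v 2 ≤ -1 := by
      rw [hcast]
      exact_mod_cast (by exact_mod_cast hc : ((v 0 + v 1 + v 2 : ℤ) : ℝ) ≤ ((-1 : ℤ) : ℝ))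
    linarith
  · have hcR : (2:ℝ) ≤ (v 0 : ℝ) + v 1 + v 2 := by
      rw [hcast]
      exact_mod_cast (by exact_mod_cast hc : (((2:ℤ)) : ℝ) ≤ ((v 0 + v 1 + v 2 : ℤ) : ℝ))
    linarith

lemma mem_triRegion {v : Fin 3 → ℤ} {q : ℝ × ℝ}
    (h0 : (v 0 : ℝ) - 1 ≤ lineF 0 q ∧ lineF 0 q ≤ (v 0 : ℝ))
    (h1 : (v 1 : ℝ) - 1 ≤ lineF 1 q ∧ lineF 1 q ≤ (v 1 : ℝ))
    (h2 : (v 2 : ℝ) - 1 ≤ lineF 2 q ∧ lineF 2 q ≤ (v 2 : ℝ)) :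
    q ∈ triRegion v := by
  rw [triRegion_mem_iff]
  intro i; fin_cases i <;> assumption

lemma mem_tile_shift (w v : Fin 3 → ℤ) (p : ℝ × ℝ)
    (h0 : lineF 0 p = (w 0 : ℝ)) (h1 : lineF 1 p = (w 1 : ℝ)) (h2 : lineF 2 p = (w 2 : ℝ))
    (a b : ℝ) (c0 c1 c2 : ℤ)
    (hv0 : v 0 = w 0 + c0) (hv1 : v 1 = w 1 + c1) (hv2 : v 2 = w 2 + c2)
    (k0 : (c0 : ℝ) - 1 ≤ b ∧ b ≤ (c0 : ℝ))
    (k1 : (c1 : ℝ) - 1 ≤ (Real.sqrt 3 * a - b)/2 ∧ (Real.sqrt 3 * a - b)/2 ≤ (c1 : ℝ))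
    (k2 : (c2 : ℝ) - 1 ≤ -(Real.sqrt 3 * a + b)/2 ∧ -(Real.sqrt 3 * a + b)/2 ≤ (c2 : ℝ)) :
    (p.1 + a, p.2 + b) ∈ triRegion v := by
  have s0 : lineF 0 (p.1 + a, p.2 + b) = lineF 0 p + b := by
    rw [lineF_zero, lineF_zero]; ring
  have s1 : lineF 1 (p.1 + a, p.2 + b) = lineF 1 p + (Real.sqrt 3 * a - b)/2 := by
    rw [lineF_one, lineF_one]; ring
  have s2 : lineF 2 (p.1 + a, p.2 + b) = lineF 2 p + (-(Real.sqrt 3 * a + b)/2) := by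
    rw [lineF_two, lineF_two]; ring
  refine mem_triRegion ⟨?_, ?_⟩ ⟨?_, ?_⟩ ⟨?_, ?_⟩ <;>
    simp only [s0, s1, s2, h0, h1, h2, hv0, hv1, hv2] <;> push_cast <;>
    [linarith [k0.1]; linarith [k0.2]; linarith [k1.1]; linarith [k1.2];
     linarith [k2.1]; linarith [k2.2]]

lemma not_subsingleton_pair (A B : Set (ℝ × ℝ)) (p q : ℝ × ℝ) (hne : p ≠ q)
    (hpA : p ∈ A) (hpB : p ∈ B) (hqA : q ∈ A) (hqB : q ∈ B) :
    ¬ (A ∩ B).Subsingleton :=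
  fun h => hne (h ⟨hpA, hpB⟩ ⟨hqA, hqB⟩)

lemma ne_shift (p : ℝ × ℝ) (a b : ℝ) (h : a ≠ 0 ∨ b ≠ 0) : p ≠ (p.1 + a, p.2 + b) := by
  intro he
  rcases h with ha | hb
  · exact ha (by have := congrArg Prod.fst he; simp at this; linarith)
  · exact hb (by have := congrArg Prod.snd he; simp at this; linarith)

def Lvec : Fin 6 → ℤ × ℤ × ℤ := ![(1,0,0),(1,1,0),(0,1,0),(0,1,1),(0,0,1),(1,0,1)]

def Shex : Finset (ℤ × ℤ × ℤ) := {(1,0,0),(1,1,0),(0,1,0),(0,1,1),(0,0,1),(1,0,1)}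

def S5a : Finset (ℤ × ℤ × ℤ) := {(0,0,0),(1,0,0),(0,1,0),(0,0,1),(1,1,1)}

def S5b : Finset (ℤ × ℤ × ℤ) := {(0,0,0),(1,1,0),(1,0,1),(0,1,1),(1,1,1)}

lemma S5a_card : S5a.card = 5 := by decide

lemma S5b_card : S5b.card = 5 := by decide

lemma Shex_card : Shex.card = 6 := by decide

lemma Lvec_mem (k : Fin 6) : Lvec k ∈ Shex := by fin_cases k <;> decide

lemma Lvec_inj : Function.Injective Lvec := by decide

lemma Lvec_ne (k : Fin 6) : Lvec k ≠ Lvec (k + 1) := by fin_cases k <;> decide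

lemma mem1 : ((1:ℤ),(0:ℤ),(0:ℤ)) ∈ Shex := by decide
lemma mem2 : ((0:ℤ),(1:ℤ),(0:ℤ)) ∈ Shex := by decide
lemma mem3 : ((0:ℤ),(0:ℤ),(1:ℤ)) ∈ Shex := by decide

lemma mem_S5a (x y z : ℤ) (ha : x = 0 ∨ x = 1) (hb : y = 0 ∨ y = 1) (hc : z = 0 ∨ z = 1)
    (hd : x + y + z ≠ 2) : (x, y, z) ∈ S5a := by
  rcases ha with rfl|rfl <;> rcases hb with rfl|rfl <;> rcases hc with rfl|rfl <;>
    revert hd <;> decide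

lemma mem_S5b (x y z : ℤ) (ha : x = 0 ∨ x = 1) (hb : y = 0 ∨ y = 1) (hc : z = 0 ∨ z = 1)
    (hd : x + y + z ≠ 1) : (x, y, z) ∈ S5b := by
  rcases ha with rfl|rfl <;> rcases hb with rfl|rfl <;> rcases hc with rfl|rfl <;>
    revert hd <;> decide

lemma mem_Shex (x y z : ℤ) (ha : x = 0 ∨ x = 1) (hb : y = 0 ∨ y = 1) (hc : z = 0 ∨ z = 1)
    (hd : x + y + z = 1 ∨ x + y + z = 2) : (x, y, z) ∈ Shex := by
  rcases ha with rfl|rfl <;> rcases hb with rfl|rfl <;> rcases hc with rfl|rfl <;>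
    revert hd <;> decide

set_option maxHeartbeats 0 in
theorem hexagon_in_common_cube (T : Fin 6 → Tile) (hinj : Function.Injective T)
    (p : ℝ × ℝ) (hp : ∀ j : Fin 6, p ∈ (T j).region) :
    (∃ σ : Equiv.Perm (Fin 6), ∀ j : Fin 6, dualGraph.Adj (T (σ j)) (T (σ (j + 1)))) ∧
    (∃ w : Fin 3 → ℤ, ∀ j : Fin 6, ∀ i : Fin 3, (T j).val i = w i ∨ (T j).val i = w i + 1) := by
  classical
  set w : Fin 3 → ℤ := fun i => ⌈lineF i p⌉ with hw
  have hpj : ∀ j i, ((T j).val i : ℝ) - 1 ≤ lineF i p ∧ lineF i p ≤ ((T j).val i : ℝ) :=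
    fun j => triRegion_mem_iff.mp (hp j)
  have hbound : ∀ j i, (T j).val i = w i ∨ (T j).val i = w i + 1 := by
    intro j i
    have h1 := (hpj j i).1
    have h2 := (hpj j i).2
    have hA : w i ≤ (T j).val i := by
      simp only [hw]; exact Int.ceil_le.mpr h2
    have hB : (T j).val i - 1 ≤ w i := by
      have hle : (((T j).val i - 1 : ℤ) : ℝ) ≤ ((⌈lineF i p⌉ : ℤ) : ℝ) := by
        push_cast
        exact le_trans (by linarith) (Int.le_ceil _)
      simp only [hw]
      exact_mod_cast hle
    omega
  set E : Fin 6 → ℤ × ℤ × ℤ :=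
    fun j => ((T j).val 0 - w 0, (T j).val 1 - w 1, (T j).val 2 - w 2) with hE
  have hEinj : Function.Injective E := by
    intro a b h
    have h0 := congrArg Prod.fst h
    have h1 := congrArg (fun x => x.2.1) h
    have h2 := congrArg (fun x => x.2.2) h
    simp only [hE] at h0 h1 h2
    apply hinj; apply Subtype.ext; funext i
    fin_cases i
    · show (T a).val 0 = (T b).val 0; omega
    · show (T a).val 1 = (T b).val 1; omega
    · show (T a).val 2 = (T b).val 2; omega
  have hcomp : ∀ j, ((T j).val 0 - w 0 = 0 ∨ (T j).val 0 - w 0 = 1) ∧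
      ((T j).val 1 - w 1 = 0 ∨ (T j).val 1 - w 1 = 1) ∧
      ((T j).val 2 - w 2 = 0 ∨ (T j).val 2 - w 2 = 1) := by
    intro j
    have b0 := hbound j 0; have b1 := hbound j 1; have b2 := hbound j 2
    exact ⟨by omega, by omega, by omega⟩
  have hsum : ∀ j, ((T j).val 0 - w 0) + ((T j).val 1 - w 1) + ((T j).val 2 - w 2)
      + (w 0 + w 1 + w 2) = 0 ∨
      ((T j).val 0 - w 0) + ((T j).val 1 - w 1) + ((T j).val 2 - w 2)
      + (w 0 + w 1 + w 2) = 1 := by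
    intro j
    have hs := isTile_sum (T j).2
    simp only [sumv] at hs
    omega
  have h2ex : ∃ j, ((T j).val 0 - w 0) + ((T j).val 1 - w 1) + ((T j).val 2 - w 2) = 2 := by
    by_contra hcon
    push_neg at hcon
    have hss : ∀ j ∈ (Finset.univ : Finset (Fin 6)),
        E j ∈ S5a := by
      intro j _
      obtain ⟨ha, hb, hc⟩ := hcomp j
      exact mem_S5a _ _ _ ha hb hc (hcon j)
    have hle := Finset.card_le_card_of_injOn E hss hEinj.injOn
    have hc5 : S5a.card = 5 := S5a_card
    rw [hc5, Finset.card_univ, Fintype.card_fin] at hle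
    omega
  have h1ex : ∃ j, ((T j).val 0 - w 0) + ((T j).val 1 - w 1) + ((T j).val 2 - w 2) = 1 := by
    by_contra hcon
    push_neg at hcon
    have hss : ∀ j ∈ (Finset.univ : Finset (Fin 6)),
        E j ∈ S5b := by
      intro j _
      obtain ⟨ha, hb, hc⟩ := hcomp j
      exact mem_S5b _ _ _ ha hb hc (hcon j)
    have hle := Finset.card_le_card_of_injOn E hss hEinj.injOn
    have hc5 : S5b.card = 5 := S5b_card
    rw [hc5, Finset.card_univ, Fintype.card_fin] at hle
    omega
  have hsw : w 0 + w 1 + w 2 = -1 := by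
    obtain ⟨j1, hj1⟩ := h1ex
    obtain ⟨j2, hj2⟩ := h2ex
    have := hsum j1; have := hsum j2; omega
  have hmemS : ∀ j, E j ∈
      Shex := by
    intro j
    obtain ⟨ha, hb, hc⟩ := hcomp j
    have hd := hsum j
    exact mem_Shex _ _ _ ha hb hc (by omega)
  have himg : Finset.image E Finset.univ =
      Shex := by
    apply Finset.eq_of_subset_of_card_le
    · intro x hx
      obtain ⟨j, _, rfl⟩ := Finset.mem_image.mp hx
      exact hmemS j
    · have hc6 : Shex.card = 6 := Shex_card
      rw [Finset.card_image_of_injective _ hEinj, hc6, Finset.card_univ, Fintype.card_fin]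
  have hsurj : ∀ x ∈ Shex,
      ∃ j, E j = x := by
    intro x hx
    rw [← himg] at hx
    obtain ⟨j, _, h⟩ := Finset.mem_image.mp hx
    exact ⟨j, h⟩
  have hvalof : ∀ j (c : ℤ × ℤ × ℤ), E j = c →
      (T j).val 0 = w 0 + c.1 ∧ (T j).val 1 = w 1 + c.2.1 ∧ (T j).val 2 = w 2 + c.2.2 := by
    intro j c h
    have h0 := congrArg Prod.fst h
    have h1 := congrArg (fun x => x.2.1) h
    have h2 := congrArg (fun x => x.2.2) h
    simp only [hE] at h0 h1 h2
    exact ⟨by omega, by omega, by omega⟩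
  have hc0 : lineF 0 p = (w 0 : ℝ) := by
    obtain ⟨ju, hju⟩ := hsurj (1,0,0) mem1
    obtain ⟨jd, hjd⟩ := hsurj (0,1,0) mem2
    have hu := (hvalof ju (1,0,0) hju).1
    have hd := (hvalof jd (0,1,0) hjd).1
    have g1 := (hpj ju 0).1
    have g2 := (hpj jd 0).2
    rw [hu] at g1; rw [hd] at g2
    push_cast at g1 g2
    linarith
  have hc1 : lineF 1 p = (w 1 : ℝ) := by
    obtain ⟨ju, hju⟩ := hsurj (0,1,0) mem2
    obtain ⟨jd, hjd⟩ := hsurj (1,0,0) mem1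
    have hu := (hvalof ju (0,1,0) hju).2.1
    have hd := (hvalof jd (1,0,0) hjd).2.1
    have g1 := (hpj ju 1).1
    have g2 := (hpj jd 1).2
    rw [hu] at g1; rw [hd] at g2
    push_cast at g1 g2
    linarith
  have hc2 : lineF 2 p = (w 2 : ℝ) := by
    obtain ⟨ju, hju⟩ := hsurj (0,0,1) mem3
    obtain ⟨jd, hjd⟩ := hsurj (1,0,0) mem1
    have hu := (hvalof ju (0,0,1) hju).2.2
    have hd := (hvalof jd (1,0,0) hjd).2.2
    have g1 := (hpj ju 2).1
    have g2 := (hpj jd 2).2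
    rw [hu] at g1; rw [hd] at g2
    push_cast at g1 g2
    linarith
  have hall : ∀ k : Fin 6, ∃ j, E j = Lvec k := fun k => hsurj (Lvec k) (Lvec_mem k)
  choose σf hσf using hall
  have hσinj : Function.Injective σf := by
    intro a b h
    apply Lvec_inj
    rw [← hσf a, ← hσf b, h]
  have σbij := Finite.injective_iff_bijective.mp hσinj
  have hval6 : ∀ k : Fin 6, (T (σf k)).val 0 = w 0 + (Lvec k).1 ∧
      (T (σf k)).val 1 = w 1 + (Lvec k).2.1 ∧ (T (σf k)).val 2 = w 2 + (Lvec k).2.2 :=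
    fun k => hvalof _ (Lvec k) (hσf k)
  have hs3 : Real.sqrt 3 * Real.sqrt 3 = 3 := Real.mul_self_sqrt (by norm_num)
  have hs3pos : 0 < Real.sqrt 3 := Real.sqrt_pos.mpr (by norm_num)
  refine ⟨⟨Equiv.ofBijective σf σbij, fun k => ?_⟩, ⟨w, hbound⟩⟩
  show EdgeAdj (T (σf k)) (T (σf (k + 1)))
  refine ⟨?_, ?_⟩
  · intro hTT
    have h' : σf k = σf (k + 1) := hinj hTT
    exact Lvec_ne k (by rw [← hσf, ← hσf, h'])
  · fin_cases k
    · exact not_subsingleton_pair _ _ p (p.1 + Real.sqrt 3/4, p.2 + 3/4)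
        (ne_shift p _ _ (Or.inr (by norm_num))) (hp _) (hp _)
        (mem_tile_shift w _ p hc0 hc1 hc2 (Real.sqrt 3/4) (3/4) 1 0 0
          (hval6 0).1 (hval6 0).2.1 (hval6 0).2.2
          (by constructor <;> push_cast <;> nlinarith [hs3]) (by constructor <;> push_cast <;> nlinarith [hs3])
          (by constructor <;> push_cast <;> nlinarith [hs3]))
        (mem_tile_shift w _ p hc0 hc1 hc2 (Real.sqrt 3/4) (3/4) 1 1 0
          (hval6 1).1 (hval6 1).2.1 (hval6 1).2.2
          (by constructor <;> push_cast <;> nlinarith [hs3]) (by constructor <;> push_cast <;> nlinarith [hs3])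
          (by constructor <;> push_cast <;> nlinarith [hs3]))
    · exact not_subsingleton_pair _ _ p (p.1 + Real.sqrt 3/2, p.2 + 0)
        (ne_shift p _ _ (Or.inl (by positivity))) (hp _) (hp _)
        (mem_tile_shift w _ p hc0 hc1 hc2 (Real.sqrt 3/2) 0 1 1 0
          (hval6 1).1 (hval6 1).2.1 (hval6 1).2.2
          (by constructor <;> push_cast <;> nlinarith [hs3]) (by constructor <;> push_cast <;> nlinarith [hs3])
          (by constructor <;> push_cast <;> nlinarith [hs3]))
        (mem_tile_shift w _ p hc0 hc1 hc2 (Real.sqrt 3/2) 0 0 1 0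
          (hval6 2).1 (hval6 2).2.1 (hval6 2).2.2
          (by constructor <;> push_cast <;> nlinarith [hs3]) (by constructor <;> push_cast <;> nlinarith [hs3])
          (by constructor <;> push_cast <;> nlinarith [hs3]))
    · exact not_subsingleton_pair _ _ p (p.1 + Real.sqrt 3/4, p.2 + -(3/4))
        (ne_shift p _ _ (Or.inr (by norm_num))) (hp _) (hp _)
        (mem_tile_shift w _ p hc0 hc1 hc2 (Real.sqrt 3/4) (-(3/4)) 0 1 0
          (hval6 2).1 (hval6 2).2.1 (hval6 2).2.2
          (by constructor <;> push_cast <;> nlinarith [hs3]) (by constructor <;> push_cast <;> nlinarith [hs3])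
          (by constructor <;> push_cast <;> nlinarith [hs3]))
        (mem_tile_shift w _ p hc0 hc1 hc2 (Real.sqrt 3/4) (-(3/4)) 0 1 1
          (hval6 3).1 (hval6 3).2.1 (hval6 3).2.2
          (by constructor <;> push_cast <;> nlinarith [hs3]) (by constructor <;> push_cast <;> nlinarith [hs3])
          (by constructor <;> push_cast <;> nlinarith [hs3]))
    · exact not_subsingleton_pair _ _ p (p.1 + -(Real.sqrt 3)/4, p.2 + -(3/4))
        (ne_shift p _ _ (Or.inr (by norm_num))) (hp _) (hp _)
        (mem_tile_shift w _ p hc0 hc1 hc2 (-(Real.sqrt 3)/4) (-(3/4)) 0 1 1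
          (hval6 3).1 (hval6 3).2.1 (hval6 3).2.2
          (by constructor <;> push_cast <;> nlinarith [hs3]) (by constructor <;> push_cast <;> nlinarith [hs3])
          (by constructor <;> push_cast <;> nlinarith [hs3]))
        (mem_tile_shift w _ p hc0 hc1 hc2 (-(Real.sqrt 3)/4) (-(3/4)) 0 0 1
          (hval6 4).1 (hval6 4).2.1 (hval6 4).2.2
          (by constructor <;> push_cast <;> nlinarith [hs3]) (by constructor <;> push_cast <;> nlinarith [hs3])
          (by constructor <;> push_cast <;> nlinarith [hs3]))
    · exact not_subsingleton_pair _ _ p (p.1 + -(Real.sqrt 3)/2, p.2 + 0)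
        (ne_shift p _ _ (Or.inl (by intro h; linarith [hs3pos]))) (hp _) (hp _)
        (mem_tile_shift w _ p hc0 hc1 hc2 (-(Real.sqrt 3)/2) 0 0 0 1
          (hval6 4).1 (hval6 4).2.1 (hval6 4).2.2
          (by constructor <;> push_cast <;> nlinarith [hs3]) (by constructor <;> push_cast <;> nlinarith [hs3])
          (by constructor <;> push_cast <;> nlinarith [hs3]))
        (mem_tile_shift w _ p hc0 hc1 hc2 (-(Real.sqrt 3)/2) 0 1 0 1
          (hval6 5).1 (hval6 5).2.1 (hval6 5).2.2
          (by constructor <;> push_cast <;> nlinarith [hs3]) (by constructor <;> push_cast <;> nlinarith [hs3])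
          (by constructor <;> push_cast <;> nlinarith [hs3]))
    · exact not_subsingleton_pair _ _ p (p.1 + -(Real.sqrt 3)/4, p.2 + 3/4)
        (ne_shift p _ _ (Or.inr (by norm_num))) (hp _) (hp _)
        (mem_tile_shift w _ p hc0 hc1 hc2 (-(Real.sqrt 3)/4) (3/4) 1 0 1
          (hval6 5).1 (hval6 5).2.1 (hval6 5).2.2
          (by constructor <;> push_cast <;> nlinarith [hs3]) (by constructor <;> push_cast <;> nlinarith [hs3])
          (by constructor <;> push_cast <;> nlinarith [hs3]))
        (mem_tile_shift w _ p hc0 hc1 hc2 (-(Real.sqrt 3)/4) (3/4) 1 0 0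
          (hval6 0).1 (hval6 0).2.1 (hval6 0).2.2
          (by constructor <;> push_cast <;> nlinarith [hs3]) (by constructor <;> push_cast <;> nlinarith [hs3])
          (by constructor <;> push_cast <;> nlinarith [hs3]))
end

section
/- If two triangles of the regular triangular tiling share a vertex (not necessarily an edge), then their cubulation images in Z^3 differ by at most 1 in every coordinate. -/
theorem vertex_sharing_coords_close (T U : Tile)
    (h : (T.region ∩ U.region).Nonempty) :
    ∀ i : Fin 3, |T.val i - U.val i| ≤ 1 := by
  obtain ⟨p, hT, hU⟩ := h
  intro i
  have h1 := hT i
  have h2 := hU i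
  rw [abs_le]
  constructor
  · have h' : (U.val i : ℝ) ≤ T.val i + 1 := by have := le_trans h2.1 h1.2; linarith
    have : U.val i ≤ T.val i + 1 := by exact_mod_cast h'
    linarith
  · have : (T.val i : ℝ) - 1 ≤ (U.val i : ℝ) := le_trans h1.1 h2.2
    have h' : (T.val i : ℝ) ≤ U.val i + 1 := by linarith
    have : T.val i ≤ U.val i + 1 := by exact_mod_cast h'
    linarith
end

section
/- In the graph on {(x,y,z) ∈ Z^3 : x+y+z ∈ {0,1}} with edges between points differing by 1 in exactly one coordinate, every cycle of length 6 is contained in a single unit cube of Z^3, i.e., its six vertices lie in a set of the form {a,a+1}×{b,b+1}×{c,c+1}. -/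
abbrev LatPt : Type := {v : Fin 3 → ℤ // v 0 + v 1 + v 2 = 0 ∨ v 0 + v 1 + v 2 = 1}

def latGraph : SimpleGraph LatPt where
  Adj a b := ∃ i : Fin 3, |a.val i - b.val i| = 1 ∧ ∀ j : Fin 3, j ≠ i → a.val j = b.val j
  symm := by
    refine ⟨?_⟩
    rintro a b ⟨i, h1, h2⟩
    exact ⟨i, by rwa [abs_sub_comm], fun j hj => (h2 j hj).symm⟩
  loopless := by
    refine ⟨?_⟩
    rintro a ⟨i, h1, -⟩
    simp at h1

def δf : Fin 3 × Bool → (Fin 3 → ℤ) := fun s i => if i = s.1 then (if s.2 then 1 else -1) else 0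

def mset (t : Bool) (a b c d e : Fin 3) : List (Fin 3 → ℤ) :=
  [0, δf (a,!t), δf (a,!t) + δf (b,t), δf (a,!t) + δf (b,t) + δf (c,!t),
   δf (a,!t) + δf (b,t) + δf (c,!t) + δf (d,t),
   δf (a,!t) + δf (b,t) + δf (c,!t) + δf (d,t) + δf (e,!t)]

def Mdef (t : Bool) (a b c d e : Fin 3) : Fin 3 → ℤ := fun i =>
  min 0 (min (δf (a,!t) i) (min ((δf (a,!t) + δf (b,t)) i)
    (min ((δf (a,!t) + δf (b,t) + δf (c,!t)) i)
    (min ((δf (a,!t) + δf (b,t) + δf (c,!t) + δf (d,t)) i)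
         ((δf (a,!t) + δf (b,t) + δf (c,!t) + δf (d,t) + δf (e,!t)) i)))))

set_option maxHeartbeats 2000000 in
theorem key : ∀ (t : Bool) (a b c d e f : Fin 3),
    δf (a,!t) + δf (b,t) + δf (c,!t) + δf (d,t) + δf (e,!t) + δf (f,t) = 0 →
    (mset t a b c d e).Nodup →
    ∀ q ∈ mset t a b c d e, ∀ i,
      q i = Mdef t a b c d e i ∨ q i = Mdef t a b c d e i + 1 := by decide

lemma δsumT (i : Fin 3) : δf (i,true) 0 + δf (i,true) 1 + δf (i,true) 2 = 1 := by
  fin_cases i <;> decide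

lemma δsumF (i : Fin 3) : δf (i,false) 0 + δf (i,false) 1 + δf (i,false) 2 = -1 := by
  fin_cases i <;> decide

lemma adj_delta {x y : LatPt} (h : latGraph.Adj x y) :
    ∃ s : Fin 3 × Bool, ∀ j, y.val j = x.val j + δf s j := by
  obtain ⟨i, habs, heq⟩ := h
  rcases (abs_eq (by norm_num : (0:ℤ) ≤ 1)).mp habs with h' | h'
  · refine ⟨(i, false), fun j => ?_⟩
    rcases eq_or_ne j i with rfl | hj
    · simp only [δf]; simp; omega
    · have := heq j hj; simp only [δf]; simp [hj]; omega
  · refine ⟨(i, true), fun j => ?_⟩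
    rcases eq_or_ne j i with rfl | hj
    · simp only [δf]; simp; omega
    · have := heq j hj; simp only [δf]; simp [hj]; omega

theorem six_cycles_lie_in_unit_cube (v : LatPt) (c : latGraph.Walk v v)
    (hc : c.IsCycle) (h6 : c.length = 6) :
    ∃ w : Fin 3 → ℤ, ∀ u ∈ c.support, ∀ i : Fin 3, u.val i = w i ∨ u.val i = w i + 1 := by
  obtain _ | @⟨_, v1, _, h1, c⟩ := c
  · simp at h6
  obtain _ | @⟨_, v2, _, h2, c⟩ := c
  · simp at h6
  obtain _ | @⟨_, v3, _, h3, c⟩ := c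
  · simp at h6
  obtain _ | @⟨_, v4, _, h4, c⟩ := c
  · simp at h6
  obtain _ | @⟨_, v5, _, h5, c⟩ := c
  · simp at h6
  obtain _ | @⟨_, v6, _, h6', c⟩ := c
  · simp at h6
  obtain _ | @⟨_, v7, _, h7, c⟩ := c
  case cons => simp [SimpleGraph.Walk.length_cons] at h6
  -- now c fully destructured; last vertex v6 unified with v
  have hsup : List.Nodup [v1, v2, v3, v4, v5, v] := hc.support_nodup
  obtain ⟨⟨i1, b1⟩, eq1⟩ := adj_delta h1
  obtain ⟨⟨i2, b2⟩, eq2⟩ := adj_delta h2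
  obtain ⟨⟨i3, b3⟩, eq3⟩ := adj_delta h3
  obtain ⟨⟨i4, b4⟩, eq4⟩ := adj_delta h4
  obtain ⟨⟨i5, b5⟩, eq5⟩ := adj_delta h5
  obtain ⟨⟨i6, b6⟩, eq6⟩ := adj_delta h6'
  have hvals2 : List.Nodup [v.val, v1.val, v2.val, v3.val, v4.val, v5.val] :=
    (List.perm_append_singleton v.val [v1.val, v2.val, v3.val, v4.val, v5.val]).nodup
      (hsup.map Subtype.val_injective)
  rcases v.2 with hv0 | hv0
  · -- sum v = 0, t = false
    have hb1 : b1 = true := by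
      cases b1
      · exfalso
        have d := δsumF i1; have p := v1.2
        have e0 := eq1 0; have e1 := eq1 1; have e2 := eq1 2; omega
      · rfl
    subst hb1
    have sv1 : v1.val 0 + v1.val 1 + v1.val 2 = 1 := by
      have d := δsumT i1
      have e0 := eq1 0; have e1 := eq1 1; have e2 := eq1 2; omega
    have hb2 : b2 = false := by
      cases b2
      · rfl
      · exfalso
        have d := δsumT i2; have p := v2.2
        have e0 := eq2 0; have e1 := eq2 1; have e2 := eq2 2; omega
    subst hb2
    have sv2 : v2.val 0 + v2.val 1 + v2.val 2 = 0 := by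
      have d := δsumF i2
      have e0 := eq2 0; have e1 := eq2 1; have e2 := eq2 2; omega
    have hb3 : b3 = true := by
      cases b3
      · exfalso
        have d := δsumF i3; have p := v3.2
        have e0 := eq3 0; have e1 := eq3 1; have e2 := eq3 2; omega
      · rfl
    subst hb3
    have sv3 : v3.val 0 + v3.val 1 + v3.val 2 = 1 := by
      have d := δsumT i3
      have e0 := eq3 0; have e1 := eq3 1; have e2 := eq3 2; omega
    have hb4 : b4 = false := by
      cases b4
      · rfl
      · exfalso
        have d := δsumT i4; have p := v4.2
        have e0 := eq4 0; have e1 := eq4 1; have e2 := eq4 2; omega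
    subst hb4
    have sv4 : v4.val 0 + v4.val 1 + v4.val 2 = 0 := by
      have d := δsumF i4
      have e0 := eq4 0; have e1 := eq4 1; have e2 := eq4 2; omega
    have hb5 : b5 = true := by
      cases b5
      · exfalso
        have d := δsumF i5; have p := v5.2
        have e0 := eq5 0; have e1 := eq5 1; have e2 := eq5 2; omega
      · rfl
    subst hb5
    have sv5 : v5.val 0 + v5.val 1 + v5.val 2 = 1 := by
      have d := δsumT i5
      have e0 := eq5 0; have e1 := eq5 1; have e2 := eq5 2; omega
    have hb6 : b6 = false := by
      cases b6
      · rfl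
      · exfalso
        have d := δsumT i6
        have e0 := eq6 0; have e1 := eq6 1; have e2 := eq6 2; omega
    subst hb6
    have hv1 : v1.val = v.val + δf (i1, true) := funext fun j => by
      have := eq1 j; simp only [Pi.add_apply]; omega
    have hv2 : v2.val = v.val + (δf (i1, true) + δf (i2, false)) := funext fun j => by
      have a1 := eq1 j; have a2 := eq2 j; simp only [Pi.add_apply]; omega
    have hv3 : v3.val = v.val + (δf (i1, true) + δf (i2, false) + δf (i3, true)) := funext fun j => by
      have a1 := eq1 j; have a2 := eq2 j; have a3 := eq3 j; simp only [Pi.add_apply]; omega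
    have hv4 : v4.val = v.val + (δf (i1, true) + δf (i2, false) + δf (i3, true) + δf (i4, false)) := funext fun j => by
      have a1 := eq1 j; have a2 := eq2 j; have a3 := eq3 j; have a4 := eq4 j
      simp only [Pi.add_apply]; omega
    have hv5 : v5.val = v.val + (δf (i1, true) + δf (i2, false) + δf (i3, true) + δf (i4, false) + δf (i5, true)) := funext fun j => by
      have a1 := eq1 j; have a2 := eq2 j; have a3 := eq3 j; have a4 := eq4 j; have a5 := eq5 j
      simp only [Pi.add_apply]; omega
    have hclose : δf (i1, true) + δf (i2, false) + δf (i3, true) + δf (i4, false) + δf (i5, true) + δf (i6, false) = 0 := funext fun j => by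
      have a1 := eq1 j; have a2 := eq2 j; have a3 := eq3 j; have a4 := eq4 j
      have a5 := eq5 j; have a6 := eq6 j
      simp only [Pi.add_apply, Pi.zero_apply]; omega
    have hmap : List.map (fun q : Fin 3 → ℤ => v.val + q) (mset false i1 i2 i3 i4 i5)
        = [v.val, v1.val, v2.val, v3.val, v4.val, v5.val] := by
      simp only [mset, List.map, Bool.not_false, add_zero, hv1, hv2, hv3, hv4, hv5]
    have hnodup : (mset false i1 i2 i3 i4 i5).Nodup :=
      List.Nodup.of_map (fun q : Fin 3 → ℤ => v.val + q) (by rw [hmap]; exact hvals2)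
    have hkey := key false i1 i2 i3 i4 i5 i6 hclose hnodup
    refine ⟨fun i => v.val i + Mdef false i1 i2 i3 i4 i5 i, ?_⟩
    intro u hu i
    show u.val i = v.val i + Mdef false i1 i2 i3 i4 i5 i ∨
      u.val i = v.val i + Mdef false i1 i2 i3 i4 i5 i + 1
    simp only [SimpleGraph.Walk.support_cons, SimpleGraph.Walk.support_nil,
      List.mem_cons, List.mem_singleton, List.not_mem_nil, or_false] at hu
    have h0 : (0 : Fin 3 → ℤ) ∈ mset false i1 i2 i3 i4 i5 := by simp [mset]
    rcases hu with rfl | rfl | rfl | rfl | rfl | rfl | rfl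
    · have hq := hkey 0 h0 i
      simp only [Pi.zero_apply] at hq; omega
    · have hq := hkey (δf (i1, true)) (by simp [mset]) i
      have he := eq1 i; omega
    · have hq := hkey (δf (i1, true) + δf (i2, false)) (by simp [mset]) i
      have he := congrFun hv2 i
      simp only [Pi.add_apply] at hq he; omega
    · have hq := hkey (δf (i1, true) + δf (i2, false) + δf (i3, true)) (by simp [mset]) i
      have he := congrFun hv3 i
      simp only [Pi.add_apply] at hq he; omega
    · have hq := hkey (δf (i1, true) + δf (i2, false) + δf (i3, true) + δf (i4, false)) (by simp [mset]) i
      have he := congrFun hv4 i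
      simp only [Pi.add_apply] at hq he; omega
    · have hq := hkey (δf (i1, true) + δf (i2, false) + δf (i3, true) + δf (i4, false) + δf (i5, true)) (by simp [mset]) i
      have he := congrFun hv5 i
      simp only [Pi.add_apply] at hq he; omega
    · have hq := hkey 0 h0 i
      simp only [Pi.zero_apply] at hq; omega
  · -- sum v = 1, t = false
    have hb1 : b1 = false := by
      cases b1
      · rfl
      · exfalso
        have d := δsumT i1; have p := v1.2
        have e0 := eq1 0; have e1 := eq1 1; have e2 := eq1 2; omega
    subst hb1
    have sv1 : v1.val 0 + v1.val 1 + v1.val 2 = 0 := by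
      have d := δsumF i1
      have e0 := eq1 0; have e1 := eq1 1; have e2 := eq1 2; omega
    have hb2 : b2 = true := by
      cases b2
      · exfalso
        have d := δsumF i2; have p := v2.2
        have e0 := eq2 0; have e1 := eq2 1; have e2 := eq2 2; omega
      · rfl
    subst hb2
    have sv2 : v2.val 0 + v2.val 1 + v2.val 2 = 1 := by
      have d := δsumT i2
      have e0 := eq2 0; have e1 := eq2 1; have e2 := eq2 2; omega
    have hb3 : b3 = false := by
      cases b3
      · rfl
      · exfalso
        have d := δsumT i3; have p := v3.2
        have e0 := eq3 0; have e1 := eq3 1; have e2 := eq3 2; omega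
    subst hb3
    have sv3 : v3.val 0 + v3.val 1 + v3.val 2 = 0 := by
      have d := δsumF i3
      have e0 := eq3 0; have e1 := eq3 1; have e2 := eq3 2; omega
    have hb4 : b4 = true := by
      cases b4
      · exfalso
        have d := δsumF i4; have p := v4.2
        have e0 := eq4 0; have e1 := eq4 1; have e2 := eq4 2; omega
      · rfl
    subst hb4
    have sv4 : v4.val 0 + v4.val 1 + v4.val 2 = 1 := by
      have d := δsumT i4
      have e0 := eq4 0; have e1 := eq4 1; have e2 := eq4 2; omega
    have hb5 : b5 = false := by
      cases b5
      · rfl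
      · exfalso
        have d := δsumT i5; have p := v5.2
        have e0 := eq5 0; have e1 := eq5 1; have e2 := eq5 2; omega
    subst hb5
    have sv5 : v5.val 0 + v5.val 1 + v5.val 2 = 0 := by
      have d := δsumF i5
      have e0 := eq5 0; have e1 := eq5 1; have e2 := eq5 2; omega
    have hb6 : b6 = true := by
      cases b6
      · exfalso
        have d := δsumF i6
        have e0 := eq6 0; have e1 := eq6 1; have e2 := eq6 2; omega
      · rfl
    subst hb6
    have hv1 : v1.val = v.val + δf (i1, false) := funext fun j => by
      have := eq1 j; simp only [Pi.add_apply]; omega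
    have hv2 : v2.val = v.val + (δf (i1, false) + δf (i2, true)) := funext fun j => by
      have a1 := eq1 j; have a2 := eq2 j; simp only [Pi.add_apply]; omega
    have hv3 : v3.val = v.val + (δf (i1, false) + δf (i2, true) + δf (i3, false)) := funext fun j => by
      have a1 := eq1 j; have a2 := eq2 j; have a3 := eq3 j; simp only [Pi.add_apply]; omega
    have hv4 : v4.val = v.val + (δf (i1, false) + δf (i2, true) + δf (i3, false) + δf (i4, true)) := funext fun j => by
      have a1 := eq1 j; have a2 := eq2 j; have a3 := eq3 j; have a4 := eq4 j
      simp only [Pi.add_apply]; omega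
    have hv5 : v5.val = v.val + (δf (i1, false) + δf (i2, true) + δf (i3, false) + δf (i4, true) + δf (i5, false)) := funext fun j => by
      have a1 := eq1 j; have a2 := eq2 j; have a3 := eq3 j; have a4 := eq4 j; have a5 := eq5 j
      simp only [Pi.add_apply]; omega
    have hclose : δf (i1, false) + δf (i2, true) + δf (i3, false) + δf (i4, true) + δf (i5, false) + δf (i6, true) = 0 := funext fun j => by
      have a1 := eq1 j; have a2 := eq2 j; have a3 := eq3 j; have a4 := eq4 j
      have a5 := eq5 j; have a6 := eq6 j
      simp only [Pi.add_apply, Pi.zero_apply]; omega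
    have hmap : List.map (fun q : Fin 3 → ℤ => v.val + q) (mset true i1 i2 i3 i4 i5)
        = [v.val, v1.val, v2.val, v3.val, v4.val, v5.val] := by
      simp only [mset, List.map, Bool.not_true, add_zero, hv1, hv2, hv3, hv4, hv5]
    have hnodup : (mset true i1 i2 i3 i4 i5).Nodup :=
      List.Nodup.of_map (fun q : Fin 3 → ℤ => v.val + q) (by rw [hmap]; exact hvals2)
    have hkey := key true i1 i2 i3 i4 i5 i6 hclose hnodup
    refine ⟨fun i => v.val i + Mdef true i1 i2 i3 i4 i5 i, ?_⟩
    intro u hu i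
    show u.val i = v.val i + Mdef true i1 i2 i3 i4 i5 i ∨
      u.val i = v.val i + Mdef true i1 i2 i3 i4 i5 i + 1
    simp only [SimpleGraph.Walk.support_cons, SimpleGraph.Walk.support_nil,
      List.mem_cons, List.mem_singleton, List.not_mem_nil, or_false] at hu
    have h0 : (0 : Fin 3 → ℤ) ∈ mset true i1 i2 i3 i4 i5 := by simp [mset]
    rcases hu with rfl | rfl | rfl | rfl | rfl | rfl | rfl
    · have hq := hkey 0 h0 i
      simp only [Pi.zero_apply] at hq; omega
    · have hq := hkey (δf (i1, false)) (by simp [mset]) i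
      have he := eq1 i; omega
    · have hq := hkey (δf (i1, false) + δf (i2, true)) (by simp [mset]) i
      have he := congrFun hv2 i
      simp only [Pi.add_apply] at hq he; omega
    · have hq := hkey (δf (i1, false) + δf (i2, true) + δf (i3, false)) (by simp [mset]) i
      have he := congrFun hv3 i
      simp only [Pi.add_apply] at hq he; omega
    · have hq := hkey (δf (i1, false) + δf (i2, true) + δf (i3, false) + δf (i4, true)) (by simp [mset]) i
      have he := congrFun hv4 i
      simp only [Pi.add_apply] at hq he; omega
    · have hq := hkey (δf (i1, false) + δf (i2, true) + δf (i3, false) + δf (i4, true) + δf (i5, false)) (by simp [mset]) i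
      have he := congrFun hv5 i
      simp only [Pi.add_apply] at hq he; omega
    · have hq := hkey 0 h0 i
      simp only [Pi.zero_apply] at hq; omega
end

section
/- For each parallel class i and integer k, the set of triangles lying on one side of hyperplane H_{i,k} (i.e., with i-th cubulation coordinate ≥ k+1) and the complementary set (coordinate ≤ k) are each edge-connected, and every dual-graph edge between the two sets crosses H_{i,k}; thus removing all dual-graph edges crossing H_{i,k} disconnects the dual graph into exactly two components (halfspaces). -/
/-- A set of triangles is edge-connected if any two of its members are joined by a
chain in the set of triangles successively sharing an edge. -/
def EdgeConnSet (A : Set Tile) : Prop :=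
  ∀ T ∈ A, ∀ U ∈ A, Relation.ReflTransGen (fun x y : Tile => x ∈ A ∧ y ∈ A ∧ EdgeAdj x y) T U

/-- A set of triangles is vertex-connected if any two of its members are joined by a
chain in the set of triangles successively sharing at least a vertex. -/
def VertexConnSet (A : Set Tile) : Prop :=
  ∀ T ∈ A, ∀ U ∈ A, Relation.ReflTransGen (fun x y : Tile => x ∈ A ∧ y ∈ A ∧ VertexAdj x y) T U

/-- The dual graph with all edges crossing the hyperplane `H_{i,k}` removed. -/
def cutGraph (i : Fin 3) (k : ℤ) : SimpleGraph Tile where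
  Adj T U := EdgeAdj T U ∧ ¬(T.val i = k ∧ U.val i = k + 1) ∧ ¬(U.val i = k ∧ T.val i = k + 1)
  symm := ⟨fun T U h => ⟨dualGraph.adj_symm h.1, h.2.2, h.2.1⟩⟩
  loopless := ⟨fun T h => h.1.1 rfl⟩

namespace HS

lemma sqrt3_pos : (0:ℝ) < Real.sqrt 3 := Real.sqrt_pos.mpr (by norm_num)
lemma sqrt3_ne : Real.sqrt 3 ≠ 0 := ne_of_gt sqrt3_pos
lemma sqrt3_sq : Real.sqrt 3 * Real.sqrt 3 = 3 := Real.mul_self_sqrt (by norm_num)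
lemma sqrt3_le_two : Real.sqrt 3 ≤ 2 := by nlinarith [sqrt3_sq, sqrt3_pos]

lemma lineF0 (p : ℝ × ℝ) : lineF 0 p = p.2 - 1/3 := by simp [lineF]
lemma lineF1 (p : ℝ × ℝ) : lineF 1 p = (Real.sqrt 3 * p.1 - p.2) / 2 - 1/3 := by simp [lineF]
lemma lineF2 (p : ℝ × ℝ) : lineF 2 p = -(Real.sqrt 3 * p.1 + p.2) / 2 - 1/3 := by simp [lineF]

lemma lineF_sum (p : ℝ × ℝ) : lineF 0 p + lineF 1 p + lineF 2 p = -1 := by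
  rw [lineF0, lineF1, lineF2]; ring

noncomputable def pt (t0 t1 : ℝ) : ℝ × ℝ := ((2*t1 + t0 + 1) / Real.sqrt 3, t0 + 1/3)

lemma pt0 (t0 t1 : ℝ) : lineF 0 (pt t0 t1) = t0 := by simp [lineF0, pt]
lemma pt1 (t0 t1 : ℝ) : lineF 1 (pt t0 t1) = t1 := by
  rw [lineF1]; show (Real.sqrt 3 * ((2*t1 + t0 + 1) / Real.sqrt 3) - (t0 + 1/3)) / 2 - 1/3 = t1
  rw [mul_div_cancel₀ _ sqrt3_ne]; ring
lemma pt2 (t0 t1 : ℝ) : lineF 2 (pt t0 t1) = -1 - t0 - t1 := by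
  have h := lineF_sum (pt t0 t1); rw [pt0, pt1] at h; linarith

end HS
namespace HS

lemma fin3_cases {P : Fin 3 → Prop} (h0 : P 0) (h1 : P 1) (h2 : P 2) : ∀ i, P i := by
  intro i; fin_cases i
  · exact h0
  · exact h1
  · exact h2

lemma mem_tri (v : Fin 3 → ℤ) (t0 t1 : ℝ)
    (h00 : (v 0:ℝ) - 1 ≤ t0) (h01 : t0 ≤ v 0)
    (h10 : (v 1:ℝ) - 1 ≤ t1) (h11 : t1 ≤ v 1)
    (h20 : (v 2:ℝ) - 1 ≤ -1 - t0 - t1) (h21 : -1 - t0 - t1 ≤ v 2) :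
    pt t0 t1 ∈ triRegion v := by
  refine fin3_cases ?_ ?_ ?_
  · rw [pt0]; exact ⟨h00, h01⟩
  · rw [pt1]; exact ⟨h10, h11⟩
  · rw [pt2]; exact ⟨h20, h21⟩

lemma continuous_lineF : ∀ i : Fin 3, Continuous (lineF i) := by
  refine fin3_cases ?_ ?_ ?_
  · have h : lineF 0 = fun p : ℝ × ℝ => p.2 - 1/3 := funext lineF0
    rw [h]; fun_prop
  · have h : lineF 1 = fun p : ℝ × ℝ => (Real.sqrt 3 * p.1 - p.2) / 2 - 1/3 := funext lineF1
    rw [h]; fun_prop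
  · have h : lineF 2 = fun p : ℝ × ℝ => -(Real.sqrt 3 * p.1 + p.2) / 2 - 1/3 := funext lineF2
    rw [h]; fun_prop

lemma isTile_of_sum (v : Fin 3 → ℤ) (h : sumv v = 0 ∨ sumv v = 1) : IsTile v := by
  have hsum : (v 0 : ℝ) + v 1 + v 2 = (sumv v : ℝ) := by push_cast [sumv]; ring
  obtain ⟨c, hc0, hc1, hc⟩ : ∃ c : ℝ, 0 < c ∧ c < 1 ∧ 3 * c = (sumv v : ℝ) + 1 := by
    rcases h with h | h
    · exact ⟨1/3, by norm_num, by norm_num, by rw [h]; norm_num⟩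
    · exact ⟨2/3, by norm_num, by norm_num, by rw [h]; norm_num⟩
  set q := pt ((v 0 : ℝ) - c) ((v 1 : ℝ) - c) with hqdef
  have hs' : (sumv v : ℝ) = (v 0 : ℝ) + v 1 + v 2 := hsum.symm
  have h2 : lineF 2 q = (v 2 : ℝ) - c := by
    rw [hqdef, pt2]; linarith
  have hq : ∀ j : Fin 3, (v j : ℝ) - 1 < lineF j q ∧ lineF j q < v j := by
    refine fin3_cases ?_ ?_ ?_
    · rw [hqdef, pt0]; constructor <;> linarith
    · rw [hqdef, pt1]; constructor <;> linarith
    · rw [h2]; constructor <;> linarith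
  refine ⟨q, ?_⟩
  rw [mem_interior]
  refine ⟨⋂ j : Fin 3, lineF j ⁻¹' Set.Ioo ((v j : ℝ) - 1) (v j), ?_, ?_, ?_⟩
  · intro p hp j
    have := Set.mem_iInter.mp hp j
    exact ⟨le_of_lt this.1, le_of_lt this.2⟩
  · exact isOpen_iInter_of_finite fun j => (isOpen_Ioo).preimage (continuous_lineF j)
  · exact Set.mem_iInter.mpr hq

end HS
namespace HS

noncomputable def sh : Fin 3 → ℝ → ℝ × ℝ → ℝ × ℝ := fun i t p =>
  if i = 0 then (p.1, p.2 + t)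
  else if i = 1 then (p.1 + t * (Real.sqrt 3 / 2), p.2 - t / 2)
  else (p.1 - t * (Real.sqrt 3 / 2), p.2 - t / 2)

lemma sh0 (t : ℝ) (p : ℝ × ℝ) : sh 0 t p = (p.1, p.2 + t) := by simp [sh]
lemma sh1 (t : ℝ) (p : ℝ × ℝ) : sh 1 t p = (p.1 + t * (Real.sqrt 3 / 2), p.2 - t / 2) := by
  simp [sh]
lemma sh2 (t : ℝ) (p : ℝ × ℝ) : sh 2 t p = (p.1 - t * (Real.sqrt 3 / 2), p.2 - t / 2) := by
  simp [sh]

lemma lineF_sh : ∀ (i : Fin 3) (t : ℝ) (p : ℝ × ℝ), lineF i (sh i t p) = lineF i p + t := by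
  refine fin3_cases ?_ ?_ ?_ <;> intro t p
  · rw [lineF0, lineF0, sh0]; dsimp only; ring
  · rw [lineF1, lineF1, sh1]; dsimp only; linear_combination (t/4) * sqrt3_sq
  · rw [lineF2, lineF2, sh2]; dsimp only; linear_combination (t/4) * sqrt3_sq

lemma abs_half_sqrt3 (t : ℝ) : |t * (Real.sqrt 3 / 2)| ≤ |t| := by
  rw [abs_mul]
  have h : |Real.sqrt 3 / 2| ≤ 1 := by
    rw [abs_of_nonneg (by positivity)]; linarith [sqrt3_le_two]
  nlinarith [abs_nonneg t]

lemma abs_half (t : ℝ) (p2 : ℝ) : |p2 - t/2 - p2| ≤ |t| := by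
  rw [show p2 - t/2 - p2 = -(t/2) by ring, abs_neg, abs_div]
  simp only [abs_two]
  linarith [abs_nonneg t]

lemma dist_sh : ∀ (i : Fin 3) (t : ℝ) (p : ℝ × ℝ), dist (sh i t p) p ≤ |t| := by
  refine fin3_cases ?_ ?_ ?_ <;> intro t p <;> rw [Prod.dist_eq]
  · rw [sh0]; dsimp only; rw [Real.dist_eq, Real.dist_eq]
    apply max_le
    · simp
    · rw [show p.2 + t - p.2 = t by ring]
  · rw [sh1]; dsimp only; rw [Real.dist_eq, Real.dist_eq]
    apply max_le
    · rw [show p.1 + t * (Real.sqrt 3/2) - p.1 = t * (Real.sqrt 3/2) by ring]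
      exact abs_half_sqrt3 t
    · exact abs_half t p.2
  · rw [sh2]; dsimp only; rw [Real.dist_eq, Real.dist_eq]
    apply max_le
    · rw [show p.1 - t * (Real.sqrt 3/2) - p.1 = -(t * (Real.sqrt 3/2)) by ring, abs_neg]
      exact abs_half_sqrt3 t
    · exact abs_half t p.2

lemma sum_of_isTile (v : Fin 3 → ℤ) (h : IsTile v) : sumv v = 0 ∨ sumv v = 1 := by
  obtain ⟨p, hp⟩ := h
  rw [mem_interior_iff_mem_nhds, Metric.mem_nhds_iff] at hp
  obtain ⟨ε, hε, hball⟩ := hp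
  have key : ∀ j : Fin 3, lineF j p + ε/2 ≤ v j ∧ (v j : ℝ) - 1 ≤ lineF j p - ε/2 := by
    intro j
    have h1 : sh j (ε/2) p ∈ triRegion v := by
      apply hball; rw [Metric.mem_ball]
      calc dist (sh j (ε/2) p) p ≤ |ε/2| := dist_sh j _ p
        _ = ε/2 := abs_of_pos (by linarith)
        _ < ε := by linarith
    have h2 : sh j (-(ε/2)) p ∈ triRegion v := by
      apply hball; rw [Metric.mem_ball]
      calc dist (sh j (-(ε/2)) p) p ≤ |(-(ε/2))| := dist_sh j _ p
        _ = ε/2 := by rw [abs_neg]; exact abs_of_pos (by linarith)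
        _ < ε := by linarith
    have e1 := (h1 j).2; have e2 := (h2 j).1
    rw [lineF_sh] at e1 e2
    exact ⟨by linarith, by linarith⟩
  have hs := lineF_sum p
  obtain ⟨a1, b1⟩ := key 0
  obtain ⟨a2, b2⟩ := key 1
  obtain ⟨a3, b3⟩ := key 2
  have hlo : (-1 : ℝ) < (sumv v : ℝ) := by push_cast [sumv]; linarith
  have hhi : (sumv v : ℝ) < 2 := by push_cast [sumv]; linarith
  have hlo' : (-1 : ℤ) < sumv v := by exact_mod_cast hlo
  have hhi' : sumv v < 2 := by exact_mod_cast hhi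
  omega

end HS
namespace HS

lemma region_def (T : Tile) : T.region = triRegion T.val := rfl

lemma nontriv_inter : ∀ (j : Fin 3) (v : Fin 3 → ℤ), ((v 0:ℝ) + v 1 + v 2 = 0) →
    ¬ (triRegion v ∩ triRegion (Function.update v j (v j + 1))).Subsingleton := by
  refine fin3_cases ?_ ?_ ?_ <;> intro v hsr hss
  · -- j = 0
    have e0 : Function.update v 0 (v 0 + 1) 0 = v 0 + 1 := by simp
    have e1 : Function.update v 0 (v 0 + 1) 1 = v 1 := by simp [Function.update]
    have e2 : Function.update v 0 (v 0 + 1) 2 = v 2 := by simp [Function.update]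
    have mem : ∀ θ : ℝ, 0 ≤ θ → θ ≤ 1 →
        pt (v 0) ((v 1 : ℝ) - θ) ∈ triRegion v ∩ triRegion (Function.update v 0 (v 0 + 1)) := by
      intro θ h0 h1
      exact ⟨mem_tri v _ _ (by linarith) le_rfl (by linarith) (by linarith) (by linarith)
          (by linarith),
        mem_tri _ _ _ (by rw [e0]; push_cast; linarith) (by rw [e0]; push_cast; linarith)
          (by rw [e1]; linarith) (by rw [e1]; linarith) (by rw [e2]; linarith)
          (by rw [e2]; linarith)⟩
    have heq := hss (mem (1/4) (by norm_num) (by norm_num)) (mem (1/2) (by norm_num) (by norm_num))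
    have := congrArg (lineF 1) heq
    rw [pt1, pt1] at this; linarith
  · -- j = 1
    have e0 : Function.update v 1 (v 1 + 1) 0 = v 0 := by simp [Function.update]
    have e1 : Function.update v 1 (v 1 + 1) 1 = v 1 + 1 := by simp
    have e2 : Function.update v 1 (v 1 + 1) 2 = v 2 := by simp [Function.update]
    have mem : ∀ θ : ℝ, 0 ≤ θ → θ ≤ 1 →
        pt ((v 0 : ℝ) - θ) (v 1) ∈ triRegion v ∩ triRegion (Function.update v 1 (v 1 + 1)) := by
      intro θ h0 h1
      exact ⟨mem_tri v _ _ (by linarith) (by linarith) (by linarith) le_rfl (by linarith)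
          (by linarith),
        mem_tri _ _ _ (by rw [e0]; linarith) (by rw [e0]; linarith)
          (by rw [e1]; push_cast; linarith) (by rw [e1]; push_cast; linarith)
          (by rw [e2]; linarith) (by rw [e2]; linarith)⟩
    have heq := hss (mem (1/4) (by norm_num) (by norm_num)) (mem (1/2) (by norm_num) (by norm_num))
    have := congrArg (lineF 0) heq
    rw [pt0, pt0] at this; linarith
  · -- j = 2
    have e0 : Function.update v 2 (v 2 + 1) 0 = v 0 := by simp [Function.update]
    have e1 : Function.update v 2 (v 2 + 1) 1 = v 1 := by simp [Function.update]
    have e2 : Function.update v 2 (v 2 + 1) 2 = v 2 + 1 := by simp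
    have mem : ∀ θ : ℝ, 0 ≤ θ → θ ≤ 1 →
        pt ((v 0 : ℝ) - θ) ((v 1 : ℝ) - 1 + θ) ∈
          triRegion v ∩ triRegion (Function.update v 2 (v 2 + 1)) := by
      intro θ h0 h1
      exact ⟨mem_tri v _ _ (by linarith) (by linarith) (by linarith) (by linarith) (by linarith)
          (by linarith),
        mem_tri _ _ _ (by rw [e0]; linarith) (by rw [e0]; linarith)
          (by rw [e1]; linarith) (by rw [e1]; linarith)
          (by rw [e2]; push_cast; linarith) (by rw [e2]; push_cast; linarith)⟩
    have heq := hss (mem (1/4) (by norm_num) (by norm_num)) (mem (1/2) (by norm_num) (by norm_num))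
    have := congrArg (lineF 0) heq
    rw [pt0, pt0] at this; linarith

lemma edgeAdj_of (T U : Tile) (j : Fin 3) (hs : sumv T.val = 0)
    (h : U.val = Function.update T.val j (T.val j + 1)) : EdgeAdj T U := by
  have hne : T ≠ U := by
    intro e
    have h2 : T.val j = T.val j + 1 := by
      conv_lhs => rw [e, h]
      simp
    omega
  have hsr : (T.val 0 : ℝ) + T.val 1 + T.val 2 = 0 := by
    have h3 : ((sumv T.val : ℤ) : ℝ) = 0 := by rw [hs]; norm_num
    push_cast [sumv] at h3; linarith
  refine ⟨hne, ?_⟩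
  rw [region_def, region_def, h]
  exact nontriv_inter j T.val hsr

end HS
namespace HS

def mkv (i : Fin 3) (a b s : ℤ) : Fin 3 → ℤ := fun x =>
  if x = i then a else if x = i + 1 then b else s - a - b

lemma mkv_i (i : Fin 3) (a b s : ℤ) : mkv i a b s i = a := by simp [mkv]

lemma mkv_sum (i : Fin 3) (a b s : ℤ) : sumv (mkv i a b s) = s := by
  fin_cases i <;> simp [mkv, sumv] <;> omega

lemma upd_i (i : Fin 3) (a b : ℤ) :
    mkv i (a + 1) b 1 = Function.update (mkv i a b 0) i (mkv i a b 0 i + 1) := by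
  funext x; fin_cases i <;> fin_cases x <;> simp [mkv, Function.update] <;> omega

lemma upd_i1 (i : Fin 3) (a b : ℤ) :
    mkv i a (b + 1) 1 = Function.update (mkv i a b 0) (i+1) (mkv i a b 0 (i+1) + 1) := by
  funext x; fin_cases i <;> fin_cases x <;> simp [mkv, Function.update] <;> omega

lemma upd_i2 (i : Fin 3) (a b : ℤ) :
    mkv i a b 1 = Function.update (mkv i a b 0) (i+2) (mkv i a b 0 (i+2) + 1) := by
  funext x; fin_cases i <;> fin_cases x <;> simp [mkv, Function.update] <;> omega

def tl0 (i : Fin 3) (a b : ℤ) : Tile := ⟨mkv i a b 0, isTile_of_sum _ (Or.inl (mkv_sum i a b 0))⟩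
def tl1 (i : Fin 3) (a b : ℤ) : Tile := ⟨mkv i a b 1, isTile_of_sum _ (Or.inr (mkv_sum i a b 1))⟩

lemma m1 (i : Fin 3) (a b : ℤ) : EdgeAdj (tl0 i a b) (tl1 i (a+1) b) :=
  edgeAdj_of _ _ i (mkv_sum i a b 0) (upd_i i a b)
lemma m2 (i : Fin 3) (a b : ℤ) : EdgeAdj (tl0 i a b) (tl1 i a (b+1)) :=
  edgeAdj_of _ _ (i+1) (mkv_sum i a b 0) (upd_i1 i a b)
lemma m3 (i : Fin 3) (a b : ℤ) : EdgeAdj (tl0 i a b) (tl1 i a b) :=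
  edgeAdj_of _ _ (i+2) (mkv_sum i a b 0) (upd_i2 i a b)

lemma edgeAdj_symm {T U : Tile} (h : EdgeAdj T U) : EdgeAdj U T :=
  ⟨h.1.symm, fun hs => h.2 (by rwa [Set.inter_comm] at hs)⟩

lemma tile_val_eq (i : Fin 3) (T : Tile) :
    T.val = mkv i (T.val i) (T.val (i+1)) (sumv T.val) := by
  funext x
  fin_cases i <;> fin_cases x <;> simp [mkv, sumv] <;> omega

end HS
namespace HS

def Rel (A : Set Tile) : Tile → Tile → Prop := fun x y => x ∈ A ∧ y ∈ A ∧ EdgeAdj x y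

lemma rel_symm (A : Set Tile) : Symmetric (Rel A) := fun _ _ h => ⟨h.2.1, h.1, edgeAdj_symm h.2.2⟩

lemma mem_tl0 {P : ℤ → Prop} {i : Fin 3} {a b : ℤ} (ha : P a) :
    tl0 i a b ∈ {T : Tile | P (T.val i)} := by
  show P ((tl0 i a b).val i); show P (mkv i a b 0 i); rw [mkv_i]; exact ha

lemma mem_tl1 {P : ℤ → Prop} {i : Fin 3} {a b : ℤ} (ha : P a) :
    tl1 i a b ∈ {T : Tile | P (T.val i)} := by
  show P ((tl1 i a b).val i); show P (mkv i a b 1 i); rw [mkv_i]; exact ha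

lemma relm1 {P : ℤ → Prop} {i : Fin 3} (a b : ℤ) (ha : P a) (ha' : P (a+1)) :
    Rel {T : Tile | P (T.val i)} (tl0 i a b) (tl1 i (a+1) b) :=
  ⟨mem_tl0 ha, mem_tl1 ha', m1 i a b⟩

lemma relm2 {P : ℤ → Prop} {i : Fin 3} (a b : ℤ) (ha : P a) :
    Rel {T : Tile | P (T.val i)} (tl0 i a b) (tl1 i a (b+1)) :=
  ⟨mem_tl0 ha, mem_tl1 ha, m2 i a b⟩

lemma relm3 {P : ℤ → Prop} {i : Fin 3} (a b : ℤ) (ha : P a) :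
    Rel {T : Tile | P (T.val i)} (tl0 i a b) (tl1 i a b) :=
  ⟨mem_tl0 ha, mem_tl1 ha, m3 i a b⟩

lemma reach_b {P : ℤ → Prop} {i : Fin 3} (a : ℤ) (ha : P a) : ∀ b : ℤ,
    Relation.ReflTransGen (Rel {T : Tile | P (T.val i)}) (tl0 i a b) (tl0 i a 0) := by
  intro b
  induction b using Int.induction_on with
  | zero => exact Relation.ReflTransGen.refl
  | succ n ih =>
    exact Relation.ReflTransGen.head (relm3 a (n+1) ha)
      (Relation.ReflTransGen.head (rel_symm _ (relm2 a n ha)) ih)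
  | pred n ih =>
    have e1 : (-(n:ℤ) - 1) + 1 = -(n:ℤ) := by ring
    have r1 := relm2 (P := P) (i := i) a (-(n:ℤ) - 1) ha
    rw [e1] at r1
    exact Relation.ReflTransGen.head r1
      (Relation.ReflTransGen.head (rel_symm _ (relm3 a (-(n:ℤ)) ha)) ih)

lemma reach_a_up (i : Fin 3) (k : ℤ) : ∀ n : ℕ,
    Relation.ReflTransGen (Rel {T : Tile | k + 1 ≤ T.val i}) (tl0 i (k+1+n) 0) (tl0 i (k+1) 0) := by
  intro n
  induction n with
  | zero => simpa using Relation.ReflTransGen.refl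
  | succ n ih =>
    have r1 := relm3 (P := fun a => k + 1 ≤ a) (i := i) (k+1+n+1) 0 (by omega)
    have r2 := relm1 (P := fun a => k + 1 ≤ a) (i := i) (k+1+n) 0 (by omega) (by omega)
    have e1 : (k+1+(n:ℤ)+1) = k+1+((n+1 : ℕ) : ℤ) := by push_cast; ring
    rw [e1] at r1 r2
    exact Relation.ReflTransGen.head r1 (Relation.ReflTransGen.head (rel_symm _ r2) ih)

lemma reach_a_down (i : Fin 3) (k : ℤ) : ∀ n : ℕ,
    Relation.ReflTransGen (Rel {T : Tile | T.val i ≤ k}) (tl0 i (k-n) 0) (tl0 i k 0) := by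
  intro n
  induction n with
  | zero => simpa using Relation.ReflTransGen.refl
  | succ n ih =>
    have r1 := relm1 (P := fun a => a ≤ k) (i := i) (k-(n+1:ℕ)) 0 (by push_cast; omega)
      (by push_cast; omega)
    have e1 : (k-((n+1:ℕ):ℤ)) + 1 = k - (n:ℕ) := by push_cast; ring
    rw [e1] at r1
    have r2 := relm3 (P := fun a => a ≤ k) (i := i) (k-(n:ℕ)) 0 (by omega)
    exact Relation.ReflTransGen.head r1 (Relation.ReflTransGen.head (rel_symm _ r2) ih)

lemma reach_canon_ge (i : Fin 3) (k : ℤ) (V : Tile) (hV : k + 1 ≤ V.val i) :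
    Relation.ReflTransGen (Rel {T : Tile | k + 1 ≤ T.val i}) V (tl0 i (k+1) 0) := by
  set a := V.val i with hadef
  set b := V.val (i+1) with hbdef
  have hmain : Relation.ReflTransGen (Rel {T : Tile | k + 1 ≤ T.val i}) (tl0 i a b)
      (tl0 i (k+1) 0) := by
    have h1 := reach_b (P := fun a => k + 1 ≤ a) (i := i) a hV b
    have h2 : Relation.ReflTransGen (Rel {T : Tile | k + 1 ≤ T.val i}) (tl0 i a 0)
        (tl0 i (k+1) 0) := by
      have e : a = k + 1 + ((a - (k+1)).toNat : ℤ) := by omega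
      rw [e]; exact reach_a_up i k _
    exact h1.trans h2
  rcases sum_of_isTile _ V.2 with h0 | h1
  · have : V = tl0 i a b := by
      apply Subtype.ext; rw [tile_val_eq i V, h0]; rfl
    rw [this]; exact hmain
  · have hv : V = tl1 i a b := by
      apply Subtype.ext; rw [tile_val_eq i V, h1]; rfl
    rw [hv]
    exact Relation.ReflTransGen.head (rel_symm _ (relm3 (P := fun x => k + 1 ≤ x) a b hV)) hmain

lemma reach_canon_le (i : Fin 3) (k : ℤ) (V : Tile) (hV : V.val i ≤ k) :
    Relation.ReflTransGen (Rel {T : Tile | T.val i ≤ k}) V (tl0 i k 0) := by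
  set a := V.val i with hadef
  set b := V.val (i+1) with hbdef
  have hmain : Relation.ReflTransGen (Rel {T : Tile | T.val i ≤ k}) (tl0 i a b)
      (tl0 i k 0) := by
    have h1 := reach_b (P := fun a => a ≤ k) (i := i) a hV b
    have h2 : Relation.ReflTransGen (Rel {T : Tile | T.val i ≤ k}) (tl0 i a 0)
        (tl0 i k 0) := by
      have e : a = k - ((k - a).toNat : ℤ) := by omega
      rw [e]; exact reach_a_down i k _
    exact h1.trans h2
  rcases sum_of_isTile _ V.2 with h0 | h1
  · have : V = tl0 i a b := by
      apply Subtype.ext; rw [tile_val_eq i V, h0]; rfl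
    rw [this]; exact hmain
  · have hv : V = tl1 i a b := by
      apply Subtype.ext; rw [tile_val_eq i V, h1]; rfl
    rw [hv]
    exact Relation.ReflTransGen.head (rel_symm _ (relm3 (P := fun x => x ≤ k) a b hV)) hmain

lemma conn_ge (i : Fin 3) (k : ℤ) : EdgeConnSet {T : Tile | k + 1 ≤ T.val i} := by
  intro T hT U hU
  exact (reach_canon_ge i k T hT).trans
    (@Std.Symm.symm _ _ (@Relation.ReflTransGen.symmetric _ _ ⟨rel_symm _⟩) _ _ (reach_canon_ge i k U hU))

lemma conn_le (i : Fin 3) (k : ℤ) : EdgeConnSet {T : Tile | T.val i ≤ k} := by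
  intro T hT U hU
  exact (reach_canon_le i k T hT).trans
    (@Std.Symm.symm _ _ (@Relation.ReflTransGen.symmetric _ _ ⟨rel_symm _⟩) _ _ (reach_canon_le i k U hU))

lemma cross (i : Fin 3) (k : ℤ) (T U : Tile) (e : EdgeAdj T U) (h1 : T.val i ≤ k)
    (h2 : k + 1 ≤ U.val i) : T.val i = k ∧ U.val i = k + 1 := by
  have hnt : (T.region ∩ U.region).Nontrivial := Set.not_subsingleton_iff.mp e.2
  obtain ⟨p, hp⟩ := hnt.nonempty
  have hT := (hp.1 i).2
  have hU := (hp.2 i).1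
  have : (U.val i : ℝ) - 1 ≤ (T.val i : ℝ) := le_trans hU hT
  have hz : U.val i ≤ T.val i + 1 := by exact_mod_cast (by linarith : (U.val i : ℝ) ≤ T.val i + 1)
  omega

end HS
theorem halfspaces_of_hyperplane (i : Fin 3) (k : ℤ) :
    EdgeConnSet {T : Tile | k + 1 ≤ T.val i} ∧
    EdgeConnSet {T : Tile | T.val i ≤ k} ∧
    (∀ T U : Tile, EdgeAdj T U → T.val i ≤ k → k + 1 ≤ U.val i →
      T.val i = k ∧ U.val i = k + 1) ∧
    (∃ T : Tile, T.val i ≤ k) ∧ (∃ T : Tile, k + 1 ≤ T.val i) ∧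
    (∀ T U : Tile, (cutGraph i k).Reachable T U ↔ (T.val i ≤ k ↔ U.val i ≤ k)) := by
  have step : ∀ x y : Tile, (cutGraph i k).Adj x y → (x.val i ≤ k ↔ y.val i ≤ k) := by
    rintro x y ⟨e, n1, n2⟩
    constructor
    · intro hx
      by_contra hy
      exact n1 (HS.cross i k x y e hx (by omega))
    · intro hy
      by_contra hx
      exact n2 (HS.cross i k y x (HS.edgeAdj_symm e) hy (by omega))
  refine ⟨HS.conn_ge i k, HS.conn_le i k, fun T U e h1 h2 => HS.cross i k T U e h1 h2,
    ⟨HS.tl0 i k 0, ?_⟩, ⟨HS.tl0 i (k+1) 0, ?_⟩, ?_⟩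
  · show HS.mkv i k 0 0 i ≤ k
    rw [HS.mkv_i]
  · show k + 1 ≤ HS.mkv i (k+1) 0 0 i
    rw [HS.mkv_i]
  · intro T U
    constructor
    · intro hr
      rw [SimpleGraph.reachable_iff_reflTransGen] at hr
      induction hr with
      | refl => exact Iff.rfl
      | tail _ h2 ih => exact ih.trans (step _ _ h2)
    · intro hiff
      rw [SimpleGraph.reachable_iff_reflTransGen]
      by_cases hT : T.val i ≤ k
      · have hU := hiff.mp hT
        refine Relation.ReflTransGen.mono ?_ _ _ (HS.conn_le i k T hT U hU)
        rintro x y ⟨hx, hy, e⟩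
        have hx' : x.val i ≤ k := hx
        have hy' : y.val i ≤ k := hy
        exact ⟨e, fun h => by have := h.2; omega, fun h => by have := h.2; omega⟩
      · have hU : ¬ U.val i ≤ k := fun h => hT (hiff.mpr h)
        have hT' : k + 1 ≤ T.val i := by omega
        have hU' : k + 1 ≤ U.val i := by omega
        refine Relation.ReflTransGen.mono ?_ _ _ (HS.conn_ge i k T hT' U hU')
        rintro x y ⟨hx, hy, e⟩
        have hx' : k + 1 ≤ x.val i := hx
        have hy' : k + 1 ≤ y.val i := hy
        exact ⟨e, fun h => by have := h.1; omega, fun h => by have := h.1; omega⟩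
end
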